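/- arXiv:2001.08083 — 2 statements merged into one kernel-verified Lean document; each statement's English description precedes it below -/
import Mathlib

section
/- Let B = β·I + ((1−β)/n)·e·eᵀ with 0 < β < 1 be the full back-off AIMD matrix. Then for every nonzero z ∈ W_T, the strict contraction property ‖D(B)z‖_T < ‖z‖_T holds. -/
noncomputable def l1 {n : ℕ} (z : Fin n → ℝ) : ℝ := ∑ i, |z i|

noncomputable def normT {n T : ℕ} (z : Fin T → Fin n → ℝ) : ℝ := ⨆ ℓ, l1 (z ℓ)

/-- The action of the block matrix `D(A)` on a block vector `z ∈ ℝ^{Tn}`: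
`(D(A)z)₁ = A z₁` and `(D(A)z)_r = (1/r)·A z₁ + ((r−1)/r)·z_{r−1}` for `r = 2,…,T`
(indices here are 0-based). -/
noncomputable def DApply {n T : ℕ} (A : Matrix (Fin n) (Fin n) ℝ)
    (z : Fin T → Fin n → ℝ) : Fin T → Fin n → ℝ :=
  fun r => (1 / ((r : ℕ) + 1) : ℝ) • A.mulVec (z ⟨0, r.pos⟩)
    + (((r : ℕ) : ℝ) / ((r : ℕ) + 1)) • z ⟨(r : ℕ) - 1, lt_of_le_of_lt (Nat.pred_le _) r.isLt⟩

/-- The full back-off AIMD matrix `B = β·I + ((1−β)/n)·e·eᵀ`. -/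
noncomputable def Bmat (n : ℕ) (β : ℝ) : Matrix (Fin n) (Fin n) ℝ :=
  β • (1 : Matrix (Fin n) (Fin n) ℝ) + ((1 - β) / (n : ℝ)) • Matrix.of (fun _ _ => (1 : ℝ))

lemma l1_add_le {n : ℕ} (v w : Fin n → ℝ) : l1 (v + w) ≤ l1 v + l1 w := by
  rw [l1, l1, l1, ← Finset.sum_add_distrib]
  exact Finset.sum_le_sum fun i _ => abs_add_le _ _

lemma l1_smul {n : ℕ} (a : ℝ) (v : Fin n → ℝ) : l1 (a • v) = |a| * l1 v := by
  simp [l1, Finset.mul_sum, abs_mul]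

lemma Bmat_mulVec {n : ℕ} (β : ℝ) (v : Fin n → ℝ) (hv : ∑ i, v i = 0) :
    (Bmat n β).mulVec v = β • v := by
  funext i
  simp only [Bmat, Matrix.mulVec, dotProduct, Matrix.add_apply, Matrix.smul_apply,
    Matrix.one_apply, Matrix.of_apply, smul_eq_mul, mul_ite, mul_one, mul_zero, add_mul,
    ite_mul, zero_mul, Finset.sum_add_distrib, Finset.sum_ite_eq, Finset.mem_univ, if_true,
    Pi.smul_apply]
  rw [← Finset.mul_sum, hv, mul_zero, add_zero]

/-- For the full back-off AIMD matrix `B = β·I + ((1−β)/n)·e·eᵀ` with `0 < β < 1`,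
and every nonzero `z ∈ W_T`, the strict contraction `‖D(B)z‖_T < ‖z‖_T` holds. -/
theorem D_backoff_strict_contraction
    (n T : ℕ) (hn : 0 < n) (hT : 0 < T)
    (β : ℝ) (hβ0 : 0 < β) (hβ1 : β < 1)
    (z : Fin T → Fin n → ℝ)
    (hzW : ∀ t, ∑ i, z t i = 0) (hz0 : z ≠ 0) :
    normT (DApply (Bmat n β) z) < normT z := by
  have hne : Nonempty (Fin T) := ⟨⟨0, hT⟩⟩
  set M := normT z with hMdef
  have hMle : ∀ t, l1 (z t) ≤ M := fun t =>
    le_ciSup (f := fun ℓ => l1 (z ℓ)) (Set.Finite.bddAbove (Set.finite_range _)) t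
  have hM : 0 < M := by
    obtain ⟨t, i, hi⟩ : ∃ t i, z t i ≠ 0 := by
      by_contra h
      push_neg at h
      exact hz0 (funext fun t => funext fun i => h t i)
    have h1 : 0 < |z t i| := abs_pos.mpr hi
    have h2 : |z t i| ≤ l1 (z t) :=
      Finset.single_le_sum (f := fun j => |z t j|) (fun _ _ => abs_nonneg _) (Finset.mem_univ i)
    exact lt_of_lt_of_le (lt_of_lt_of_le h1 h2) (hMle t)
  set c : ℝ := ((T : ℝ) - 1 + β) / T with hcdef
  have hTpos : (0 : ℝ) < T := by exact_mod_cast hT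
  have hc1 : c < 1 := by
    rw [hcdef, div_lt_one hTpos]; linarith
  have hbound : ∀ r : Fin T, l1 (DApply (Bmat n β) z r) ≤ c * M := by
    intro r
    have hr1 : (0 : ℝ) < (r : ℕ) + 1 := by positivity
    have hB : (Bmat n β).mulVec (z ⟨0, r.pos⟩) = β • z ⟨0, r.pos⟩ :=
      Bmat_mulVec β _ (hzW _)
    have key : l1 (DApply (Bmat n β) z r)
        ≤ (β / ((r : ℕ) + 1)) * M + (((r : ℕ) : ℝ) / ((r : ℕ) + 1)) * M := by
      unfold DApply
      rw [hB]
      refine le_trans (l1_add_le _ _) ?_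
      rw [smul_smul, l1_smul, l1_smul]
      have ha : |(1 / ((r : ℕ) + 1) : ℝ) * β| = β / ((r : ℕ) + 1) := by
        rw [abs_of_nonneg (by positivity)]; ring
      have hb : |(((r : ℕ) : ℝ) / ((r : ℕ) + 1))| = ((r : ℕ) : ℝ) / ((r : ℕ) + 1) := by
        rw [abs_of_nonneg (by positivity)]
      rw [ha, hb]
      gcongr <;> first | positivity | exact hMle _
    refine le_trans key ?_
    have hfrac : (β / ((r : ℕ) + 1)) + (((r : ℕ) : ℝ) / ((r : ℕ) + 1)) ≤ c := by
      rw [← add_div, hcdef, div_le_div_iff₀ hr1 hTpos]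
      have hrT : ((r : ℕ) : ℝ) ≤ (T : ℝ) - 1 := by
        have := r.isLt
        have : ((r : ℕ) : ℝ) ≤ (T : ℝ) - 1 := by
          have h := Nat.lt_iff_add_one_le.mp r.isLt
          have : ((r : ℕ) + 1 : ℝ) ≤ T := by exact_mod_cast h
          linarith
        exact this
      nlinarith
    nlinarith [hM]
  have hle : normT (DApply (Bmat n β) z) ≤ c * M := ciSup_le (f := fun ℓ => l1 (DApply (Bmat n β) z ℓ)) hbound
  have : c * M < M := by nlinarith
  exact lt_of_le_of_lt hle this
end

section
/- Every matrix U of the form blockdiag(D(A¹), I) or blockdiag(I, D(A²)), where A¹ and A² are entrywise nonnegative column stochastic n×n matrices and I is the Tn×Tn identity, is non-expansive on the subspace W with respect to the norm ‖·‖; that is, for every z ∈ W, ‖Uz‖ ≤ ‖z‖. -/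
/-- The norm on pairs: `‖(y¹, y²)‖ = max{‖y¹‖_T, ‖y²‖_T}`. -/
noncomputable def normPair {n T : ℕ} (y : (Fin T → Fin n → ℝ) × (Fin T → Fin n → ℝ)) : ℝ :=
  max (normT y.1) (normT y.2)

lemma l1_mulVec_le {n : ℕ} (A : Matrix (Fin n) (Fin n) ℝ)
    (hAnn : ∀ i j, 0 ≤ A i j) (hA : ∀ j, ∑ i, A i j = 1) (x : Fin n → ℝ) :
    l1 (A.mulVec x) ≤ l1 x := by
  unfold l1
  calc ∑ i, |A.mulVec x i| ≤ ∑ i, ∑ j, A i j * |x j| := by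
        apply Finset.sum_le_sum
        intro i _
        calc |A.mulVec x i| = |∑ j, A i j * x j| := rfl
          _ ≤ ∑ j, |A i j * x j| := Finset.abs_sum_le_sum_abs _ _
          _ = ∑ j, A i j * |x j| := by
              apply Finset.sum_congr rfl; intro j _
              rw [abs_mul, abs_of_nonneg (hAnn i j)]
    _ = ∑ j, (∑ i, A i j) * |x j| := by
        rw [Finset.sum_comm]
        simp [Finset.sum_mul]
    _ = ∑ j, |x j| := by
        apply Finset.sum_congr rfl; intro j _; rw [hA j, one_mul]

lemma le_normT {n T : ℕ} (z : Fin T → Fin n → ℝ) (ℓ : Fin T) :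
    l1 (z ℓ) ≤ normT z := by
  unfold normT
  exact le_ciSup (f := fun ℓ => l1 (z ℓ)) (Set.Finite.bddAbove (Set.finite_range _)) ℓ

lemma normT_DApply_le {n T : ℕ} (A : Matrix (Fin n) (Fin n) ℝ)
    (hAnn : ∀ i j, 0 ≤ A i j) (hA : ∀ j, ∑ i, A i j = 1)
    (hT : 0 < T) (z : Fin T → Fin n → ℝ) :
    normT (DApply A z) ≤ normT z := by
  have : Nonempty (Fin T) := ⟨⟨0, hT⟩⟩
  apply ciSup_le
  intro r
  have hden : (((r : ℕ) : ℝ) + 1) ≠ 0 := by positivity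
  have ha : (0:ℝ) ≤ 1 / (((r : ℕ) : ℝ) + 1) := by positivity
  have hb : (0:ℝ) ≤ ((r : ℕ) : ℝ) / (((r : ℕ) : ℝ) + 1) := by positivity
  have key : l1 (DApply A z r)
      ≤ (1 / (((r : ℕ) : ℝ) + 1)) * l1 (A.mulVec (z ⟨0, r.pos⟩))
        + (((r : ℕ) : ℝ) / (((r : ℕ) : ℝ) + 1))
          * l1 (z ⟨(r : ℕ) - 1, lt_of_le_of_lt (Nat.pred_le _) r.isLt⟩) := by
    unfold DApply l1
    rw [Finset.mul_sum, Finset.mul_sum, ← Finset.sum_add_distrib]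
    refine Finset.sum_le_sum fun i _ => ?_
    simp only [Pi.add_apply, Pi.smul_apply, smul_eq_mul]
    refine (abs_add_le _ _).trans ?_
    rw [abs_mul, abs_mul, abs_of_nonneg ha, abs_of_nonneg hb]
  refine key.trans ?_
  have hab : (1 / (((r : ℕ) : ℝ) + 1)) + ((r : ℕ) : ℝ) / (((r : ℕ) : ℝ) + 1) = 1 := by
    rw [← add_div, add_comm (1:ℝ), div_self hden]
  calc (1 / (((r : ℕ) : ℝ) + 1)) * l1 (A.mulVec (z ⟨0, r.pos⟩))
        + (((r : ℕ) : ℝ) / (((r : ℕ) : ℝ) + 1))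
          * l1 (z ⟨(r : ℕ) - 1, lt_of_le_of_lt (Nat.pred_le _) r.isLt⟩)
      ≤ (1 / (((r : ℕ) : ℝ) + 1)) * normT z
        + (((r : ℕ) : ℝ) / (((r : ℕ) : ℝ) + 1)) * normT z := by
        gcongr
        · exact le_trans (l1_mulVec_le A hAnn hA _) (le_normT z _)
        · exact le_normT z _
    _ = normT z := by rw [← add_mul, hab, one_mul]

/-- Every matrix of the form `blockdiag(D(A¹), I)` or `blockdiag(I, D(A²))`, with `A¹`, `A²`
entrywise nonnegative column stochastic, is non-expansive on `W` w.r.t. `‖·‖`. -/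
theorem U_nonexpansive_on_W
    (n T : ℕ) (hn : 0 < n) (hT : 0 < T)
    (A1 A2 : Matrix (Fin n) (Fin n) ℝ)
    (hA1nn : ∀ i j, 0 ≤ A1 i j) (hA1 : ∀ j, ∑ i, A1 i j = 1)
    (hA2nn : ∀ i j, 0 ≤ A2 i j) (hA2 : ∀ j, ∑ i, A2 i j = 1)
    (z1 z2 : Fin T → Fin n → ℝ)
    (hz1 : ∀ t, ∑ i, z1 t i = 0) (hz2 : ∀ t, ∑ i, z2 t i = 0) :
    normPair (DApply A1 z1, z2) ≤ normPair (z1, z2) ∧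
    normPair (z1, DApply A2 z2) ≤ normPair (z1, z2) := by
  constructor
  · exact max_le_max (normT_DApply_le A1 hA1nn hA1 hT z1) le_rfl
  · exact max_le_max le_rfl (normT_DApply_le A2 hA2nn hA2 hT z2)
end
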